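/- arXiv:1309.7433 — 4 statements merged into one kernel-verified Lean document; each statement's English description precedes it below -/
import Mathlib

section
/- Let f = h + conj(g) with h(z) = z + Σ a_j z^j analytic on the unit disk satisfying Re(1 + z h''(z)/h'(z)) > -1/2, and g analytic with g(0)=0 and g'(z) = e^{iθ} z h'(z). Then the coefficients b_2, b_3 of g satisfy |b_3 - λ b_2²| ≤ 1 + |λ|/4 for every real λ. -/
open Complex Metric Filter Topology

lemma coeff_eq_iteratedDeriv (f : ℂ → ℂ) (c : ℕ → ℂ)
    (hsum : ∀ z ∈ ball (0:ℂ) 1, HasSum (fun j : ℕ => c j * z ^ j) (f z)) (n : ℕ) :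
    (n.factorial : ℂ) * c n = iteratedDeriv n f 0 := by
  have hball : HasFPowerSeriesOnBall f (FormalMultilinearSeries.ofScalars ℂ c) 0 1 := by
    refine ⟨?_, one_pos, ?_⟩
    · apply ENNReal.le_of_forall_nnreal_lt
      intro r hr
      have hrlt : (r : ℝ) < 1 := by exact_mod_cast hr
      have hmem : ((r : ℝ) : ℂ) ∈ ball (0:ℂ) 1 := by
        simp [mem_ball, dist_zero_right, _root_.abs_of_nonneg r.coe_nonneg, hrlt]
      have hs : Summable (fun j : ℕ => c j * ((r:ℝ):ℂ) ^ j) := (hsum _ hmem).summable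
      have heq2 : (fun j : ℕ => ‖FormalMultilinearSeries.ofScalars ℂ c j‖ * (r:ℝ) ^ j)
          = fun j : ℕ => ‖c j * ((r:ℝ):ℂ) ^ j‖ := by
        funext j
        rw [FormalMultilinearSeries.ofScalars_norm, norm_mul, norm_pow, Complex.norm_real,
          Real.norm_eq_abs, _root_.abs_of_nonneg r.coe_nonneg]
      have ht : Tendsto (fun j : ℕ => ‖FormalMultilinearSeries.ofScalars ℂ c j‖ * (r:ℝ) ^ j)
          atTop (𝓝 0) := by
        rw [heq2]
        simpa using (hs.tendsto_atTop_zero).norm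
      exact FormalMultilinearSeries.le_radius_of_tendsto _ ht
    · intro y hy
      have hmem : y ∈ ball (0:ℂ) 1 := by
        have hy' : ‖y‖ₑ < 1 := by simpa using hy
        rw [mem_ball, dist_zero_right]
        rw [← ofReal_norm_eq_enorm, ENNReal.ofReal_lt_one] at hy'
        exact hy'
      have hthis := hsum y hmem
      have heq : (fun j : ℕ => FormalMultilinearSeries.ofScalars ℂ c j fun _ => y)
          = fun j : ℕ => c j * y ^ j := by
        funext j
        rw [FormalMultilinearSeries.ofScalars_apply_eq, smul_eq_mul]
      rw [heq, zero_add]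
      exact hthis
  have key := hball.factorial_smul (1:ℂ) n
  rw [FormalMultilinearSeries.ofScalars_apply_eq] at key
  rw [iteratedDeriv_eq_iteratedFDeriv]
  rw [← key]
  simp [nsmul_eq_mul]

lemma carath (q : ℂ → ℂ) (hq : DifferentiableOn ℂ q (ball (0:ℂ) 1)) (hq0 : q 0 = 1)
    (hre : ∀ z ∈ ball (0:ℂ) 1, 0 < (q z).re) : ‖deriv q 0‖ ≤ 2 := by
  set w : ℂ → ℂ := fun z => (q z - 1) / (q z + 1) with hw
  have hne : ∀ z ∈ ball (0:ℂ) 1, q z + 1 ≠ 0 := by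
    intro z hz hzero
    have h1 := hre z hz
    have h2 : (q z + 1).re = 0 := by rw [hzero]; simp
    rw [Complex.add_re, Complex.one_re] at h2
    linarith
  have hwd : DifferentiableOn ℂ w (ball (0:ℂ) 1) :=
    (hq.sub (differentiableOn_const 1)).div (hq.add (differentiableOn_const 1)) hne
  have hw0 : w 0 = 0 := by simp [hw, hq0]
  have hmaps : Set.MapsTo w (ball (0:ℂ) 1) (ball (w 0) 1) := by
    rw [hw0]
    intro z hz
    simp only [mem_ball, dist_zero_right, hw]
    have h1 := hre z hz
    have hpos : 0 < ‖q z + 1‖ := norm_pos_iff.2 (hne z hz)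
    rw [norm_div, div_lt_one hpos]
    have h2 : ‖q z - 1‖ ^ 2 < ‖q z + 1‖ ^ 2 := by
      rw [Complex.sq_norm, Complex.sq_norm]
      simp only [Complex.normSq_apply, Complex.sub_re, Complex.sub_im, Complex.add_re,
        Complex.add_im, Complex.one_re, Complex.one_im]
      nlinarith
    exact lt_of_pow_lt_pow_left₀ 2 (norm_nonneg _) h2
  have hder : ‖deriv w 0‖ ≤ 1 := by
    have := Complex.norm_deriv_le_div_of_mapsTo_ball hwd (hmaps.mono_right ball_subset_closedBall) one_pos
    simpa using this
  have hqd : DifferentiableAt ℂ q 0 :=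
    (hq.differentiableAt (isOpen_ball.mem_nhds (mem_ball_self one_pos)))
  have hD : HasDerivAt w ((deriv q 0 * (q 0 + 1) - (q 0 - 1) * deriv q 0) / (q 0 + 1) ^ 2) 0 :=
    (hqd.hasDerivAt.sub_const 1).div (hqd.hasDerivAt.add_const 1)
      (by rw [hq0]; norm_num)
  have hwderiv : deriv w 0 = deriv q 0 / 2 := by
    rw [hD.deriv, hq0]
    ring_nf
  rw [hwderiv] at hder
  rw [norm_div] at hder
  simp only [Complex.norm_ofNat] at hder
  linarith [(div_le_one (by norm_num : (0:ℝ) < 2)).mp (by simpa using hder)]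

private lemma alg_id (m k' : ℕ) (d U DU : ℂ) (hd : d ≠ 0) (hU : U ≠ 0) :
    1 + (-((k':ℂ)+1)*d) * ((((m:ℂ)+1) * d^m * U + d^(m+1) * DU)) / (d^(m+1) * U)
      = 1 - (((m+1)*(k'+1) : ℕ) : ℂ) + (-((k':ℂ)+1)*d) * DU / U := by
  push_cast
  field_simp
  ring

lemma phi_ne_zero (φ : ℂ → ℂ) (hφ : AnalyticOnNhd ℂ φ (ball (0:ℂ) 1)) (hφ0 : φ 0 = 1)
    (hre : ∀ z ∈ ball (0:ℂ) 1, (1 + z * deriv φ z / φ z).re > -1/2) :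
    ∀ z ∈ ball (0:ℂ) 1, φ z ≠ 0 := by
  intro z0 hz0 hzero
  have hz0ne : z0 ≠ 0 := fun h => by rw [h, hφ0] at hzero; exact one_ne_zero hzero
  have hA : AnalyticAt ℂ φ z0 := hφ z0 hz0
  have hnotev : ¬ (∀ᶠ z in 𝓝 z0, φ z = 0) := by
    intro hev
    have h1 : Set.EqOn φ 0 (ball (0:ℂ) 1) :=
      hφ.eqOn_zero_of_preconnected_of_eventuallyEq_zero
        (convex_ball (0:ℂ) 1).isPreconnected hz0 hev
    have h2 := h1 (mem_ball_self one_pos)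
    rw [hφ0] at h2
    exact one_ne_zero h2
  have hfin : analyticOrderAt φ z0 ≠ ⊤ := fun h => hnotev (analyticOrderAt_eq_top.mp h)
  obtain ⟨n, hn⟩ := WithTop.ne_top_iff_exists.mp hfin
  obtain ⟨u, hu, hu0, hev⟩ := (hA.analyticOrderAt_eq_natCast (n := n)).mp hn.symm
  have hn1 : 1 ≤ n := by
    rcases Nat.eq_zero_or_pos n with h0 | h; swap
    · exact h
    · exfalso
      have h1 := hev.self_of_nhds
      rw [h0] at h1
      simp only [pow_zero, one_smul, hzero] at h1
      exact hu0 h1.symm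
  -- derivative of deriv u is continuous at z0
  obtain ⟨s, hs_mem, hs⟩ := hu.exists_mem_nhds_analyticOnNhd
  have hduA : AnalyticAt ℂ (deriv u) z0 := hs.deriv z0 (mem_of_mem_nhds hs_mem)
  -- eventual formula for deriv φ
  have hderiv_ev : ∀ᶠ z in 𝓝 z0,
      deriv φ z = ((n:ℂ)) * (z - z0) ^ (n - 1) * u z + (z - z0) ^ n * deriv u z := by
    have h1 : deriv φ =ᶠ[𝓝 z0] deriv (fun z => (z - z0) ^ n * u z) := by
      apply Filter.EventuallyEq.deriv
      filter_upwards [hev] with z hzz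
      rw [hzz, smul_eq_mul]
    have h2 : ∀ᶠ z in 𝓝 z0, AnalyticAt ℂ u z := hu.eventually_analyticAt
    filter_upwards [h1, h2] with z hz1 hz2
    rw [hz1]
    have hd : HasDerivAt (fun z => (z - z0) ^ n * u z)
        (((n:ℂ) * (z - z0) ^ (n - 1) * 1) * u z + (z - z0) ^ n * deriv u z) z :=
      (((hasDerivAt_id z).sub_const z0).pow n).mul hz2.differentiableAt.hasDerivAt
    rw [hd.deriv]
    ring
  have huev : ∀ᶠ z in 𝓝 z0, u z ≠ 0 := hu.continuousAt.eventually_ne hu0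
  -- sequence approaching z0 radially
  set zs : ℕ → ℂ := fun k => ((1 - 1/((k:ℝ)+2) : ℝ) : ℂ) * z0 with hzs
  have hek : ∀ k : ℕ, (0:ℝ) < 1/((k:ℝ)+2) ∧ 1/((k:ℝ)+2) < 1 := by
    intro k
    have hk2 : (0:ℝ) < (k:ℝ) + 2 := by positivity
    constructor
    · positivity
    · rw [div_lt_one hk2]
      have : (0:ℝ) ≤ (k:ℝ) := Nat.cast_nonneg k
      linarith
  have hdd : ∀ k : ℕ, zs k - z0 = ((-(1/((k:ℝ)+2)) : ℝ) : ℂ) * z0 := by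
    intro k
    simp only [hzs]
    push_cast
    ring
  have hzs_ne : ∀ k, zs k ≠ z0 := by
    intro k h
    have h2 := hdd k
    rw [h, sub_self] at h2
    have h3 : ((-(1/((k:ℝ)+2)) : ℝ) : ℂ) ≠ 0 := by
      rw [Complex.ofReal_ne_zero]
      have := (hek k).1
      intro hc; rw [neg_eq_zero] at hc; linarith
    exact (mul_ne_zero h3 hz0ne) h2.symm
  have hzs_ball : ∀ k, zs k ∈ ball (0:ℂ) 1 := by
    intro k
    have h0 := (hek k).1
    have h1 := (hek k).2
    have hz0lt : ‖z0‖ < 1 := by simpa [mem_ball, dist_zero_right] using hz0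
    simp only [hzs, mem_ball, dist_zero_right, norm_mul, Complex.norm_real, Real.norm_eq_abs]
    have habs : |1 - 1/((k:ℝ)+2)| ≤ 1 := by
      rw [abs_le]; constructor <;> linarith
    nlinarith [norm_nonneg z0]
  have htend : Tendsto zs atTop (𝓝 z0) := by
    have h1 : Tendsto (fun k : ℕ => 1/((k:ℝ)+2)) atTop (𝓝 0) :=
      Tendsto.div_atTop tendsto_const_nhds
        (tendsto_atTop_add_const_right atTop 2 tendsto_natCast_atTop_atTop)
    have h2 : Tendsto (fun k : ℕ => (1 - 1/((k:ℝ)+2) : ℝ)) atTop (𝓝 1) := by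
      simpa using tendsto_const_nhds.sub h1
    have h3 : Tendsto (fun k : ℕ => ((1 - 1/((k:ℝ)+2) : ℝ) : ℂ)) atTop (𝓝 1) := by
      simpa [Function.comp_def] using (Complex.continuous_ofReal.tendsto 1).comp h2
    simpa [hzs] using h3.mul_const z0
  set ψ : ℂ → ℂ := fun z => z * deriv u z / u z with hψdef
  have hψc : ContinuousAt ψ z0 :=
    (continuousAt_id.mul hduA.continuousAt).div hu.continuousAt hu0
  have hψt : Tendsto (fun k => (ψ (zs k)).re) atTop (𝓝 ((ψ z0).re)) :=
    (Complex.continuous_re.tendsto _).comp ((hψc.tendsto).comp htend)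
  -- main identity
  have hval : ∀ᶠ k in atTop,
      (1 + zs k * deriv φ (zs k) / φ (zs k)).re
        = 1 - ((n*(k+1) : ℕ) : ℝ) + (ψ (zs k)).re := by
    filter_upwards [htend.eventually hev, htend.eventually hderiv_ev, htend.eventually huev]
      with k h1 h2 h3
    have hdne : zs k - z0 ≠ 0 := sub_ne_zero.mpr (hzs_ne k)
    have hzsd : zs k = -((k:ℂ)+1) * (zs k - z0) := by
      rw [hdd k]
      simp only [hzs]
      have hk2 : ((k:ℂ) + 2) ≠ 0 := by
        intro hc
        have : ((k:ℝ) + 2 : ℝ) = 0 := by exact_mod_cast congrArg Complex.re hc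
        have : (0:ℝ) ≤ (k:ℝ) := Nat.cast_nonneg k
        linarith [(hek k).1]
      push_cast
      field_simp
      ring
    obtain ⟨m, rfl⟩ : ∃ m, n = m + 1 := ⟨n - 1, (Nat.succ_pred_eq_of_pos hn1).symm⟩
    have halg := alg_id m k (zs k - z0) (u (zs k)) (deriv u (zs k)) hdne h3
    rw [← hzsd] at halg
    have hC : 1 + zs k * deriv φ (zs k) / φ (zs k)
        = 1 - (((m+1)*(k+1) : ℕ) : ℂ) + ψ (zs k) := by
      rw [h1, h2, smul_eq_mul]
      push_cast at halg ⊢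
      exact halg
    rw [hC]
    simp [Complex.add_re, Complex.sub_re, Complex.one_re, Complex.natCast_re]
  -- contradiction
  have hL : ∀ᶠ k in atTop, (ψ (zs k)).re < (ψ z0).re + 1 :=
    hψt.eventually_lt_const (lt_add_one _)
  have hK : ∀ᶠ k : ℕ in atTop, (ψ z0).re + 5/2 < (k:ℝ) :=
    tendsto_natCast_atTop_atTop.eventually_gt_atTop _
  obtain ⟨k, h1, h2, h3⟩ := (hval.and (hL.and hK)).exists
  have h4 := hre (zs k) (hzs_ball k)
  rw [h1] at h4
  have h5 : ((n*(k+1) : ℕ) : ℝ) ≥ (k:ℝ) := by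
    have hn1' : (1:ℝ) ≤ (n:ℝ) := by exact_mod_cast hn1
    push_cast
    nlinarith [Nat.cast_nonneg (α := ℝ) k]
  linarith

theorem stmt_3 (h g : ℂ → ℂ) (a b : ℕ → ℂ) (θ lam : ℝ)
    (hanal : AnalyticOn ℂ h (ball (0:ℂ) 1))
    (ganal : AnalyticOn ℂ g (ball (0:ℂ) 1))
    (h0 : h 0 = 0) (g0 : g 0 = 0) (h1 : deriv h 0 = 1)
    (hg : ∀ z ∈ ball (0:ℂ) 1,
      deriv g z = Complex.exp (θ * Complex.I) * z * deriv h z)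
    (hre : ∀ z ∈ ball (0:ℂ) 1,
      (1 + z * deriv (deriv h) z / deriv h z).re > -1/2)
    (hcoef : ∀ z ∈ ball (0:ℂ) 1, HasSum (fun j : ℕ => a j * z ^ j) (h z))
    (gcoef : ∀ z ∈ ball (0:ℂ) 1, HasSum (fun j : ℕ => b j * z ^ j) (g z))
    (ha0 : a 0 = 0) (ha1 : a 1 = 1) (hb0 : b 0 = 0) :
    ‖b 3 - (lam : ℂ) * (b 2) ^ 2‖ ≤ 1 + |lam| / 4 := by
  have hN : AnalyticOnNhd ℂ h (ball (0:ℂ) 1) :=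
    (isOpen_ball.analyticOn_iff_analyticOnNhd).mp hanal
  set φ : ℂ → ℂ := deriv h with hφdef
  have hφan : AnalyticOnNhd ℂ φ (ball (0:ℂ) 1) := hN.deriv
  have hφ0 : φ 0 = 1 := h1
  have hre' : ∀ z ∈ ball (0:ℂ) 1, (1 + z * deriv φ z / φ z).re > -1/2 := hre
  have hnz : ∀ z ∈ ball (0:ℂ) 1, φ z ≠ 0 := phi_ne_zero φ hφan hφ0 hre'
  set D : ℂ := deriv φ 0 with hDdef
  have hφd : AnalyticOnNhd ℂ (deriv φ) (ball (0:ℂ) 1) := hφan.deriv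
  set q : ℂ → ℂ := fun z => ((2/3:ℝ):ℂ) * (((3/2:ℝ):ℂ) + z * deriv φ z / φ z) with hq
  have hqd : DifferentiableOn ℂ q (ball (0:ℂ) 1) := by
    refine DifferentiableOn.mul (differentiableOn_const _) ?_
    refine DifferentiableOn.add (differentiableOn_const _) ?_
    exact (differentiableOn_id.mul hφd.differentiableOn).div hφan.differentiableOn hnz
  have hq0 : q 0 = 1 := by
    simp only [hq]
    rw [hφ0]
    norm_num
  have hqre : ∀ z ∈ ball (0:ℂ) 1, 0 < (q z).re := by
    intro z hz
    have hres := hre' z hz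
    have hXre : -(3/2) < (z * deriv φ z / φ z).re := by
      have he : (1 + z * deriv φ z / φ z).re = 1 + (z * deriv φ z / φ z).re := by
        simp [Complex.add_re]
      rw [he] at hres
      linarith
    have hmain : (q z).re = 2/3 * (3/2 + (z * deriv φ z / φ z).re) := by
      simp [hq, Complex.mul_re, Complex.add_re, Complex.add_im, Complex.ofReal_re,
        Complex.ofReal_im]
    rw [hmain]
    linarith
  have hφdiff : DifferentiableAt ℂ φ 0 := (hφan 0 (mem_ball_self one_pos)).differentiableAt
  have hφddiff : DifferentiableAt ℂ (deriv φ) 0 :=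
    (hφd 0 (mem_ball_self one_pos)).differentiableAt
  have hQD : deriv q 0 = ((2/3:ℝ):ℂ) * D := by
    have h1' : HasDerivAt (fun z : ℂ => z * deriv φ z)
        (1 * deriv φ 0 + 0 * deriv (deriv φ) 0) 0 :=
      (hasDerivAt_id 0).mul hφddiff.hasDerivAt
    have h2' := h1'.div hφdiff.hasDerivAt (by rw [hφ0]; exact one_ne_zero)
    have h3' := (h2'.const_add (((3/2:ℝ):ℂ))).const_mul ((2/3:ℝ):ℂ)
    rw [show deriv q 0 = _ from h3'.deriv]
    rw [hφ0]
    ring_nf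
    rw [hDdef]
  have hcar := carath q hqd hq0 hqre
  rw [hQD, norm_mul, Complex.norm_real, Real.norm_eq_abs] at hcar
  have habs23 : |((2:ℝ)/3)| = 2/3 := by norm_num
  rw [habs23] at hcar
  have hDabs : ‖D‖ ≤ 3 := by linarith
  -- now the g side
  set c : ℂ := Complex.exp (θ * Complex.I) with hc
  have hb2' := coeff_eq_iteratedDeriv g b gcoef 2
  have hb3' := coeff_eq_iteratedDeriv g b gcoef 3
  have hball0 : ball (0:ℂ) 1 ∈ 𝓝 (0:ℂ) := isOpen_ball.mem_nhds (mem_ball_self one_pos)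
  have hgev : deriv g =ᶠ[𝓝 0] (fun z => c * z * φ z) := by
    filter_upwards [hball0] with z hz using hg z hz
  have hFev : deriv (fun z => c * z * φ z) =ᶠ[𝓝 0]
      (fun z => c * φ z + c * z * deriv φ z) := by
    filter_upwards [hball0] with z hz
    have hd : HasDerivAt (fun z => c * z * φ z) ((c * 1) * φ z + (c * z) * deriv φ z) z :=
      ((hasDerivAt_id z).const_mul c).mul ((hφan z hz).differentiableAt.hasDerivAt)
    rw [hd.deriv]
    ring
  have hi2 : iteratedDeriv 2 g = deriv (deriv g) := by
    rw [show (2:ℕ) = 1 + 1 from rfl, iteratedDeriv_succ, iteratedDeriv_one]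
  have hi3 : iteratedDeriv 3 g = deriv (deriv (deriv g)) := by
    rw [show (3:ℕ) = 1 + 1 + 1 from rfl, iteratedDeriv_succ, iteratedDeriv_succ,
      iteratedDeriv_one]
  have hg2 : iteratedDeriv 2 g 0 = c := by
    rw [hi2, hgev.deriv_eq, hFev.eq_of_nhds, hφ0]
    ring
  have hg3 : iteratedDeriv 3 g 0 = 2 * c * D := by
    rw [hi3]
    have e2 : deriv (deriv g) =ᶠ[𝓝 0] (fun z => c * φ z + c * z * deriv φ z) :=
      hgev.deriv.trans hFev
    rw [e2.deriv_eq]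
    have hd : HasDerivAt (fun z => c * φ z + c * z * deriv φ z)
        (c * deriv φ 0 + ((c * 1) * deriv φ 0 + (c * 0) * deriv (deriv φ) 0)) 0 :=
      (hφdiff.hasDerivAt.const_mul c).add
        (((hasDerivAt_id 0).const_mul c).mul hφddiff.hasDerivAt)
    rw [hd.deriv]
    ring
  have hb2 : b 2 = c / 2 := by
    have h2 : (2:ℂ) * b 2 = c := by
      rw [← hg2, ← hb2']
      norm_num [Nat.factorial]
    linear_combination h2 / 2
  have hb3 : b 3 = c * D / 3 := by
    have h3 : (6:ℂ) * b 3 = 2 * c * D := by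
      rw [← hg3, ← hb3']
      norm_num [Nat.factorial]
    linear_combination h3 / 6
  have habsc : ‖c‖ = 1 := by
    rw [hc, Complex.norm_exp]
    simp [Complex.mul_re]
  rw [hb2, hb3]
  calc ‖c * D / 3 - ↑lam * (c / 2) ^ 2‖
      ≤ ‖c * D / 3‖ + ‖↑lam * (c / 2) ^ 2‖ := norm_sub_le _ _
    _ ≤ 1 + |lam| / 4 := by
        have e1 : ‖c * D / 3‖ = ‖D‖ / 3 := by
          rw [norm_div, norm_mul, habsc]
          norm_num
        have e2 : ‖(↑lam : ℂ) * (c / 2) ^ 2‖ = |lam| / 4 := by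
          rw [norm_mul, norm_pow, norm_div, habsc, Complex.norm_real,
            Real.norm_eq_abs]
          norm_num
          ring
        rw [e1, e2]
        have : ‖D‖ ≤ 3 := by exact hDabs
        linarith
end

section
/- Let F be in HS_p and not an affine mapping (i.e., not of the form z + conj(b_{1,1} z)). Then for every z ∈ 𝔻 \ {0} and every ζ ∈ ℂ with |ζ| = 1, the quantity Φ(z) = (ζ+1)·L[F](z) - (ζ-1)·F(z) is nonzero, where L = z ∂/∂z - z̄ ∂/∂z̄. -/
open Complex Metric Finset

/-- The polyharmonic mapping with coefficients `a`, `b`. -/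
noncomputable def polyF (p : ℕ) (a b : ℕ → ℕ → ℂ) (z : ℂ) : ℂ :=
  ∑ k ∈ Finset.Icc 1 p, ((‖z‖ : ℂ)) ^ (2 * (k - 1)) *
    ∑' j : ℕ, (a k j * z ^ j + (starRingEnd ℂ) (b k j * z ^ j))

/-- The action of `L = z ∂/∂z - z̄ ∂/∂z̄` on the polyharmonic mapping. -/
noncomputable def polyLF (p : ℕ) (a b : ℕ → ℕ → ℂ) (z : ℂ) : ℂ :=
  ∑ k ∈ Finset.Icc 1 p, ((‖z‖ : ℂ)) ^ (2 * (k - 1)) *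
    ∑' j : ℕ, (j : ℂ) * (a k j * z ^ j - (starRingEnd ℂ) (b k j * z ^ j))

lemma abs_of_normSq_le {w : ℂ} {c : ℝ} (hc : 0 ≤ c) (h : Complex.normSq w ≤ c^2) :
    ‖w‖ ≤ c := by
  rw [Complex.norm_def]
  calc Real.sqrt (Complex.normSq w) ≤ Real.sqrt (c^2) := Real.sqrt_le_sqrt h
    _ = c := Real.sqrt_sq hc

lemma abs_key (ζ : ℂ) (hζ : ‖ζ‖ = 1) (j : ℕ) (hj : 1 ≤ j) :
    ‖(ζ+1)*(j:ℂ) - (ζ-1)‖ ≤ 2*j ∧ ‖(ζ+1)*(j:ℂ) + (ζ-1)‖ ≤ 2*j := by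
  have hx : ζ.re*ζ.re + ζ.im*ζ.im = 1 := by
    have h2 : Complex.normSq ζ = 1 := by
      rw [← Complex.sq_norm, hζ]; norm_num
    simpa [Complex.normSq_apply] using h2
  have hj' : (1:ℝ) ≤ (j:ℝ) := by exact_mod_cast hj
  have hx1 : ζ.re ≤ 1 := by nlinarith [sq_nonneg ζ.im, sq_nonneg (ζ.re - 1)]
  have hprod : (0:ℝ) ≤ ((j:ℝ)^2 - 1) * (2 - 2*ζ.re) := by
    apply mul_nonneg <;> nlinarith
  constructor <;>
  refine abs_of_normSq_le (by positivity) ?_ <;>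
  · simp only [Complex.normSq_apply, Complex.add_re, Complex.add_im, Complex.sub_re,
      Complex.sub_im, Complex.mul_re, Complex.mul_im, Complex.one_re, Complex.one_im,
      Complex.natCast_re, Complex.natCast_im]
    nlinarith [hprod, hx]

lemma gg_bound (ζ : ℂ) (hζ : ‖ζ‖ = 1) (j : ℕ) (hj : 1 ≤ j) (u v : ℂ) :
    ‖(ζ+1) * ((j:ℂ) * (u - v)) - (ζ-1) * (u + v)‖
      ≤ 2*j*(‖u‖ + ‖v‖) := by
  have hre : (ζ+1) * ((j:ℂ) * (u - v)) - (ζ-1) * (u + v)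
      = ((ζ+1)*(j:ℂ) - (ζ-1)) * u - ((ζ+1)*(j:ℂ) + (ζ-1)) * v := by ring
  obtain ⟨h1, h2⟩ := abs_key ζ hζ j hj
  rw [hre]
  calc ‖((ζ+1)*(j:ℂ) - (ζ-1)) * u - ((ζ+1)*(j:ℂ) + (ζ-1)) * v‖
      ≤ ‖((ζ+1)*(j:ℂ) - (ζ-1)) * u‖ + ‖((ζ+1)*(j:ℂ) + (ζ-1)) * v‖ :=
        norm_sub_le _ _
    _ = ‖(ζ+1)*(j:ℂ) - (ζ-1)‖ * ‖u‖
        + ‖(ζ+1)*(j:ℂ) + (ζ-1)‖ * ‖v‖ := by rw [norm_mul, norm_mul]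
    _ ≤ (2*j) * ‖u‖ + (2*j) * ‖v‖ := by
        exact add_le_add (mul_le_mul_of_nonneg_right h1 (norm_nonneg _))
          (mul_le_mul_of_nonneg_right h2 (norm_nonneg _))
    _ = 2*j*(‖u‖ + ‖v‖) := by ring

set_option maxHeartbeats 1000000 in
theorem stmt_11 (p : ℕ) (hp : 1 ≤ p) (a b : ℕ → ℕ → ℂ)
    (ha11 : a 1 1 = 1) (hb11 : ‖b 1 1‖ < 1)
    (hzero : ∀ k, a k 0 = 0 ∧ b k 0 = 0)
    (hS : ∀ k ∈ Finset.Icc 1 p, Summable (fun j : ℕ =>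
      if 2 ≤ j then ((2 * (k - 1) + j : ℕ) : ℝ) *
        (‖a k j‖ + ‖b k j‖) else 0))
    (hcond : ∑ k ∈ Finset.Icc 1 p, ∑' j : ℕ,
        (if 2 ≤ j then ((2 * (k - 1) + j : ℕ) : ℝ) *
          (‖a k j‖ + ‖b k j‖) else 0)
      ≤ 1 - ‖b 1 1‖ -
        ∑ k ∈ Finset.Icc 2 p, ((2 * k - 1 : ℕ) : ℝ) *
          (‖a k 1‖ + ‖b k 1‖))
    (hlt : ‖b 1 1‖ + ∑ k ∈ Finset.Icc 2 p, ((2 * k - 1 : ℕ) : ℝ) *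
          (‖a k 1‖ + ‖b k 1‖) < 1)
    (hnaff : ¬ ∀ z : ℂ, polyF p a b z = z + (starRingEnd ℂ) (b 1 1 * z)) :
    ∀ z ∈ ball (0:ℂ) 1, z ≠ 0 → ∀ ζ : ℂ, ‖ζ‖ = 1 →
      (ζ + 1) * polyLF p a b z - (ζ - 1) * polyF p a b z ≠ 0 := by
  intro z hz hz0 ζ hζ
  have hr0 : 0 < ‖z‖ := norm_pos_iff.mpr hz0
  have hr1 : ‖z‖ < 1 := by
    simpa using mem_ball_zero_iff.mp hz
  -- abbreviations
  set W : ℕ → ℕ → ℝ := fun k j => if 2 ≤ j then ((2 * (k - 1) + j : ℕ) : ℝ) *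
      (‖a k j‖ + ‖b k j‖) else 0 with hW
  set G : ℕ → ℕ → ℂ := fun k j =>
      (ζ+1) * ((j:ℂ) * (a k j * z ^ j - (starRingEnd ℂ) (b k j * z ^ j)))
      - (ζ-1) * (a k j * z ^ j + (starRingEnd ℂ) (b k j * z ^ j)) with hG
  have hWnn : ∀ k j, 0 ≤ W k j := by
    intro k j
    simp only [hW]
    split
    · positivity
    · exact le_rfl
  have hSW : ∀ k ∈ Finset.Icc 1 p, Summable (W k) := by
    intro k hk; exact hS k hk
  -- the norm of G is controlled
  have hGnorm : ∀ k, 1 ≤ k → ∀ j : ℕ, 1 ≤ j →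
      ‖G k j‖ ≤ 2*j*(‖a k j‖ + ‖b k j‖) * (‖z‖)^j := by
    intro k hk j hj
    have := gg_bound ζ hζ j hj (a k j * z ^ j) ((starRingEnd ℂ) (b k j * z ^ j))
    rw [hG]
    refine le_trans this ?_
    have h1 : ‖a k j * z ^ j‖ = ‖a k j‖ * (‖z‖)^j := by
      rw [norm_mul, norm_pow]
    have h2 : ‖(starRingEnd ℂ) (b k j * z ^ j)‖
        = ‖b k j‖ * (‖z‖)^j := by
      rw [Complex.norm_conj, norm_mul, norm_pow]
    rw [h1, h2]
    have hjn : (0:ℝ) ≤ 2*(j:ℝ) := by positivity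
    nlinarith [pow_nonneg (norm_nonneg z) j]
  have hG0 : ∀ k, G k 0 = 0 := by
    intro k
    simp [hG, (hzero k).1, (hzero k).2]
  -- majorant
  set M : ℕ → ℕ → ℝ := fun k j => 4 * W k j +
      (if j = 1 then 4*(‖a k 1‖ + ‖b k 1‖) else 0) with hM
  have hMsum : ∀ k ∈ Finset.Icc 1 p, Summable (M k) := by
    intro k hk
    refine ((hSW k hk).mul_left 4).add ?_
    exact summable_of_ne_finset_zero (s := {1}) (by
      intro j hj
      simp only [Finset.mem_singleton] at hj
      simp [hj])
  have hrle : ‖z‖ ≤ 1 := hr1.le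
  have hpowle : ∀ j : ℕ, (‖z‖)^j ≤ 1 := fun j =>
    pow_le_one₀ (norm_nonneg z) hrle
  -- domination of the three term families
  have hdom : ∀ k ∈ Finset.Icc 1 p, ∀ j : ℕ,
      ‖a k j * z ^ j + (starRingEnd ℂ) (b k j * z ^ j)‖ ≤ M k j ∧
      ‖(j:ℂ) * (a k j * z ^ j - (starRingEnd ℂ) (b k j * z ^ j))‖ ≤ M k j ∧
      ‖G k j‖ ≤ M k j := by
    intro k hk j
    have hk1 : 1 ≤ k := (Finset.mem_Icc.mp hk).1
    have hA : (0:ℝ) ≤ ‖a k j‖ + ‖b k j‖ := by positivity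
    have habs1 : ‖a k j * z ^ j + (starRingEnd ℂ) (b k j * z ^ j)‖
        ≤ (‖a k j‖ + ‖b k j‖) * (‖z‖)^j := by
      calc ‖a k j * z ^ j + (starRingEnd ℂ) (b k j * z ^ j)‖
          ≤ ‖a k j * z ^ j‖ + ‖(starRingEnd ℂ) (b k j * z ^ j)‖ :=
            norm_add_le _ _
        _ = (‖a k j‖ + ‖b k j‖) * (‖z‖)^j := by
            rw [Complex.norm_conj, norm_mul, norm_mul, norm_pow]; ring
    have habs2 : ‖(j:ℂ) * (a k j * z ^ j - (starRingEnd ℂ) (b k j * z ^ j))‖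
        ≤ (j:ℝ) * ((‖a k j‖ + ‖b k j‖) * (‖z‖)^j) := by
      rw [norm_mul, Complex.norm_natCast]
      refine mul_le_mul_of_nonneg_left ?_ (by positivity)
      calc ‖a k j * z ^ j - (starRingEnd ℂ) (b k j * z ^ j)‖
          ≤ ‖a k j * z ^ j‖ + ‖(starRingEnd ℂ) (b k j * z ^ j)‖ :=
            norm_sub_le _ _
        _ = (‖a k j‖ + ‖b k j‖) * (‖z‖)^j := by
            rw [Complex.norm_conj, norm_mul, norm_mul, norm_pow]; ring
    match j with
    | 0 =>
      refine ⟨?_, ?_, ?_⟩ <;>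
        simp [hG, hM, hW, (hzero k).1, (hzero k).2]
    | 1 =>
      have hM1 : M k 1 = 4*(‖a k 1‖ + ‖b k 1‖) := by
        simp [hM, hW]
      have hG1 : ‖G k 1‖ ≤ 2*(1:ℝ)*(‖a k 1‖ + ‖b k 1‖) * (‖z‖)^1 := by
        simpa using hGnorm k hk1 1 le_rfl
      rw [hM1]
      refine ⟨?_, ?_, ?_⟩
      · refine le_trans habs1 ?_
        nlinarith [hpowle 1]
      · refine le_trans habs2 ?_
        push_cast
        nlinarith [hpowle 1]
      · refine le_trans hG1 ?_
        nlinarith [hpowle 1]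
    | (n+2) =>
      have hle2 : 2 ≤ n + 2 := by omega
      have hWval : W k (n+2) = ((2 * (k - 1) + (n+2) : ℕ) : ℝ) *
          (‖a k (n+2)‖ + ‖b k (n+2)‖) := by
        simp [hW]
      have hwge : ((n:ℝ)+2) ≤ ((2 * (k - 1) + (n+2) : ℕ) : ℝ) := by
        have : (n+2 : ℕ) ≤ 2 * (k - 1) + (n+2) := by omega
        exact_mod_cast this
      have hMval : M k (n+2) = 4 * W k (n+2) := by
        simp [hM]
      rw [hMval, hWval]
      have hAn : (0:ℝ) ≤ ‖a k (n+2)‖ + ‖b k (n+2)‖ := by positivity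
      have hpow : (‖z‖)^(n+2) ≤ 1 := hpowle _
      have hGn : ‖G k (n+2)‖ ≤ 2*((n:ℝ)+2)*(‖a k (n+2)‖ + ‖b k (n+2)‖)
          * (‖z‖)^(n+2) := by
        have := hGnorm k hk1 (n+2) (by omega)
        push_cast at this ⊢
        exact this
      have hP0 : (0:ℝ) ≤ ‖z‖ ^ (n+2) := pow_nonneg (norm_nonneg z) (n+2)
      have hw0 : (0:ℝ) ≤ ((2 * (k - 1) + (n+2) : ℕ) : ℝ) := by positivity
      have hwA0 : (0:ℝ) ≤ ((2 * (k - 1) + (n+2) : ℕ) : ℝ)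
          * (‖a k (n+2)‖ + ‖b k (n+2)‖) := mul_nonneg hw0 hAn
      have hstep : ((n:ℝ)+2) * ((‖a k (n+2)‖ + ‖b k (n+2)‖)
            * ‖z‖ ^ (n+2))
          ≤ ((2 * (k - 1) + (n+2) : ℕ) : ℝ)
            * (‖a k (n+2)‖ + ‖b k (n+2)‖) := by
        calc ((n:ℝ)+2) * ((‖a k (n+2)‖ + ‖b k (n+2)‖)
              * ‖z‖ ^ (n+2))
            ≤ ((n:ℝ)+2) * ((‖a k (n+2)‖ + ‖b k (n+2)‖) * 1) := by
              gcongr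
          _ = ((n:ℝ)+2) * (‖a k (n+2)‖ + ‖b k (n+2)‖) := by ring
          _ ≤ ((2 * (k - 1) + (n+2) : ℕ) : ℝ)
              * (‖a k (n+2)‖ + ‖b k (n+2)‖) :=
            mul_le_mul_of_nonneg_right hwge hAn
      have hge1 : (‖a k (n+2)‖ + ‖b k (n+2)‖) * ‖z‖ ^ (n+2)
          ≤ ((n:ℝ)+2) * ((‖a k (n+2)‖ + ‖b k (n+2)‖)
            * ‖z‖ ^ (n+2)) :=
        le_mul_of_one_le_left (mul_nonneg hAn hP0)
          (by have h := Nat.cast_nonneg (α := ℝ) n; linarith)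
      push_cast at hstep hwA0 habs1 habs2 hGn hge1 ⊢
      refine ⟨?_, ?_, ?_⟩
      · refine le_trans habs1 ?_
        nlinarith [hstep, hge1, hwA0]
      · refine le_trans habs2 ?_
        nlinarith [hstep, hwA0]
      · refine le_trans hGn ?_
        nlinarith [hstep, hwA0]
  -- summability
  have hsum1 : ∀ k ∈ Finset.Icc 1 p,
      Summable (fun j : ℕ => a k j * z ^ j + (starRingEnd ℂ) (b k j * z ^ j)) := by
    intro k hk
    refine Summable.of_norm (Summable.of_nonneg_of_le (fun j => norm_nonneg _)
      (fun j => (hdom k hk j).1) (hMsum k hk))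
  have hsum2 : ∀ k ∈ Finset.Icc 1 p,
      Summable (fun j : ℕ => (j:ℂ) * (a k j * z ^ j - (starRingEnd ℂ) (b k j * z ^ j))) := by
    intro k hk
    refine Summable.of_norm (Summable.of_nonneg_of_le (fun j => norm_nonneg _)
      (fun j => (hdom k hk j).2.1) (hMsum k hk))
  have hsumGnorm : ∀ k ∈ Finset.Icc 1 p, Summable (fun j : ℕ => ‖G k j‖) := by
    intro k hk
    exact Summable.of_nonneg_of_le (fun j => norm_nonneg _)
      (fun j => (hdom k hk j).2.2) (hMsum k hk)
  have hsumG : ∀ k ∈ Finset.Icc 1 p, Summable (G k) := by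
    intro k hk
    exact Summable.of_norm (hsumGnorm k hk)
  -- the basic identity
  have hpoly : (ζ + 1) * polyLF p a b z - (ζ - 1) * polyF p a b z
      = ∑ k ∈ Finset.Icc 1 p, ((‖z‖ : ℂ)) ^ (2 * (k - 1)) * ∑' j : ℕ, G k j := by
    rw [polyLF, polyF, Finset.mul_sum, Finset.mul_sum, ← Finset.sum_sub_distrib]
    refine Finset.sum_congr rfl ?_
    intro k hk
    have hGt : ∑' j : ℕ, G k j
        = (ζ+1) * ∑' j : ℕ, ((j:ℂ) * (a k j * z ^ j - (starRingEnd ℂ) (b k j * z ^ j)))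
          - (ζ-1) * ∑' j : ℕ, (a k j * z ^ j + (starRingEnd ℂ) (b k j * z ^ j)) := by
      rw [← tsum_mul_left, ← tsum_mul_left,
        ← Summable.tsum_sub ((hsum2 k hk).mul_left (ζ+1)) ((hsum1 k hk).mul_left (ζ-1))]
    rw [hGt]; ring
  clear hnaff
  -- membership facts
  have h1p : (1:ℕ) ∈ Finset.Icc 1 p := Finset.mem_Icc.mpr ⟨le_rfl, hp⟩
  have hpow2 : ∀ m : ℕ, 2 ≤ m → (‖z‖)^m ≤ (‖z‖)^2 :=
    fun m hm => pow_le_pow_of_le_one (norm_nonneg z) hrle hm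
  -- the key uniform estimate
  have hkey : ∀ (k j : ℕ), 1 ≤ k → 1 ≤ j → ∀ c : ℝ, (j:ℝ) ≤ c → 2 ≤ 2*(k-1)+j →
      (‖z‖)^(2*(k-1)) * ‖G k j‖
        ≤ 2*(‖z‖)^2 * (c * (‖a k j‖ + ‖b k j‖)) := by
    intro k j hk hj c hc hm
    have hb := hGnorm k hk j hj
    have hA : (0:ℝ) ≤ ‖a k j‖ + ‖b k j‖ := by positivity
    have hj1 : (1:ℝ) ≤ (j:ℝ) := by exact_mod_cast hj
    have hc0 : (0:ℝ) ≤ c := le_trans (by linarith) hc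
    have h1 : (‖z‖)^(2*(k-1)+j) ≤ (‖z‖)^2 := hpow2 _ hm
    calc (‖z‖)^(2*(k-1)) * ‖G k j‖
        ≤ (‖z‖)^(2*(k-1)) *
            (2*(j:ℝ)*(‖a k j‖ + ‖b k j‖) * (‖z‖)^j) :=
          mul_le_mul_of_nonneg_left hb (by positivity)
      _ = 2*(j:ℝ)*(‖a k j‖ + ‖b k j‖) * ((‖z‖)^(2*(k-1)+j)) := by
          rw [pow_add]; ring
      _ ≤ 2*(‖z‖)^2 * (c * (‖a k j‖ + ‖b k j‖)) := by
          nlinarith [mul_le_mul_of_nonneg_left h1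
              (by positivity : (0:ℝ) ≤ 2*(j:ℝ)*(‖a k j‖ + ‖b k j‖)),
            mul_le_mul_of_nonneg_right hc
              (by positivity : (0:ℝ) ≤ 2*(‖a k j‖ + ‖b k j‖)
                * (‖z‖)^2)]
  -- tail estimate for k = 1
  have htailnorm : Summable (fun j : ℕ => ‖if j = 1 then 0 else G 1 j‖) := by
    refine Summable.of_nonneg_of_le (fun j => norm_nonneg _) (fun j => ?_) (hsumGnorm 1 h1p)
    split
    · simpa using norm_nonneg _
    · exact le_rfl
  have htail : ‖∑' j : ℕ, (if j = 1 then 0 else G 1 j)‖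
      ≤ 2*(‖z‖)^2 * ∑' j : ℕ, W 1 j := by
    calc ‖∑' j : ℕ, (if j = 1 then 0 else G 1 j)‖
        ≤ ∑' j : ℕ, ‖if j = 1 then 0 else G 1 j‖ := norm_tsum_le_tsum_norm htailnorm
      _ ≤ ∑' j : ℕ, 2*(‖z‖)^2 * W 1 j := by
          refine Summable.tsum_le_tsum (fun j => ?_) htailnorm ((hSW 1 h1p).mul_left _)
          match j with
          | 0 => simp [hG0, hW]
          | 1 => simp [hW, norm_nonneg, sq_nonneg]
          | (n+2) =>
            rw [if_neg (by omega)]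
            have hWv : W 1 (n+2) = ((2 * (1 - 1) + (n+2) : ℕ) : ℝ) *
                (‖a 1 (n+2)‖ + ‖b 1 (n+2)‖) := by
              simp [hW]
            rw [hWv]
            have := hkey 1 (n+2) le_rfl (by omega) ((2 * (1 - 1) + (n+2) : ℕ) : ℝ)
              (by exact_mod_cast (by omega : (n+2 : ℕ) ≤ 2 * (1 - 1) + (n+2))) (by omega)
            simpa using this
      _ = 2*(‖z‖)^2 * ∑' j : ℕ, W 1 j := tsum_mul_left
  -- estimate for the k ≥ 2 blocks
  have hk2 : ∀ k ∈ Finset.Icc 2 p,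
      ‖((‖z‖ : ℂ)) ^ (2 * (k - 1)) * ∑' j : ℕ, G k j‖
      ≤ 2*(‖z‖)^2 * (∑' j : ℕ, W k j)
        + 2*(‖z‖)^2 * (((2 * k - 1 : ℕ) : ℝ)
          * (‖a k 1‖ + ‖b k 1‖)) := by
    intro k hk
    obtain ⟨hk2', hkp'⟩ := Finset.mem_Icc.mp hk
    have hkp : k ∈ Finset.Icc 1 p := Finset.mem_Icc.mpr ⟨by omega, hkp'⟩
    have hcnorm : ‖((‖z‖ : ℂ)) ^ (2 * (k - 1))‖ = (‖z‖)^(2*(k-1)) := by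
      rw [norm_pow, Complex.norm_real, Real.norm_eq_abs,
        _root_.abs_of_nonneg (norm_nonneg z)]
    have hsumfin : Summable (fun j : ℕ => if j = 1 then 2*(‖z‖)^2
        * (((2 * k - 1 : ℕ) : ℝ) * (‖a k 1‖ + ‖b k 1‖)) else 0) :=
      summable_of_ne_finset_zero (s := {1}) (by
        intro j hj
        simp only [Finset.mem_singleton] at hj
        simp [hj])
    have hpoint : ∀ j : ℕ, (‖z‖)^(2*(k-1)) * ‖G k j‖
        ≤ 2*(‖z‖)^2 * W k j + (if j = 1 then 2*(‖z‖)^2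
          * (((2 * k - 1 : ℕ) : ℝ) * (‖a k 1‖ + ‖b k 1‖)) else 0) := by
      intro j
      match j with
      | 0 => simp [hG0, hW]
      | 1 =>
        have hW1 : W k 1 = 0 := by simp [hW]
        rw [hW1, if_pos rfl]
        have := hkey k 1 (by omega) le_rfl ((2 * k - 1 : ℕ) : ℝ)
          (by exact_mod_cast (by omega : (1:ℕ) ≤ 2 * k - 1)) (by omega)
        simpa using this
      | (n+2) =>
        rw [if_neg (by omega)]
        have hWv : W k (n+2) = ((2 * (k - 1) + (n+2) : ℕ) : ℝ) *
            (‖a k (n+2)‖ + ‖b k (n+2)‖) := by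
          simp [hW]
        rw [hWv]
        have := hkey k (n+2) (by omega) (by omega) ((2 * (k - 1) + (n+2) : ℕ) : ℝ)
          (by exact_mod_cast (by omega : (n+2 : ℕ) ≤ 2 * (k - 1) + (n+2))) (by omega)
        simpa using this
    calc ‖((‖z‖ : ℂ)) ^ (2 * (k - 1)) * ∑' j : ℕ, G k j‖
        = (‖z‖)^(2*(k-1)) * ‖∑' j : ℕ, G k j‖ := by rw [norm_mul, hcnorm]
      _ ≤ (‖z‖)^(2*(k-1)) * ∑' j : ℕ, ‖G k j‖ :=
          mul_le_mul_of_nonneg_left (norm_tsum_le_tsum_norm (hsumGnorm k hkp)) (by positivity)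
      _ = ∑' j : ℕ, (‖z‖)^(2*(k-1)) * ‖G k j‖ := tsum_mul_left.symm
      _ ≤ ∑' j : ℕ, (2*(‖z‖)^2 * W k j + (if j = 1 then 2*(‖z‖)^2
            * (((2 * k - 1 : ℕ) : ℝ) * (‖a k 1‖ + ‖b k 1‖)) else 0)) :=
          Summable.tsum_le_tsum hpoint ((hsumGnorm k hkp).mul_left _)
            (((hSW k hkp).mul_left _).add hsumfin)
      _ = 2*(‖z‖)^2 * (∑' j : ℕ, W k j)
          + 2*(‖z‖)^2 * (((2 * k - 1 : ℕ) : ℝ)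
            * (‖a k 1‖ + ‖b k 1‖)) := by
          rw [Summable.tsum_add ((hSW k hkp).mul_left _) hsumfin, tsum_mul_left, tsum_ite_eq]
  -- decomposition of the sum
  have hIcc : Finset.Icc 1 p = insert 1 (Finset.Icc 2 p) := by
    ext x
    simp only [Finset.mem_Icc, Finset.mem_insert]
    omega
  have h1notin : (1:ℕ) ∉ Finset.Icc 2 p := by simp
  have htsum1 : ∑' j : ℕ, G 1 j = G 1 1 + ∑' j : ℕ, (if j = 1 then 0 else G 1 j) :=
    Summable.tsum_eq_add_tsum_ite (hsumG 1 h1p) 1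
  have hphi : (ζ + 1) * polyLF p a b z - (ζ - 1) * polyF p a b z
      = G 1 1 + ((∑' j : ℕ, (if j = 1 then 0 else G 1 j))
        + ∑ k ∈ Finset.Icc 2 p, ((‖z‖ : ℂ)) ^ (2 * (k - 1)) * ∑' j : ℕ, G k j) := by
    rw [hpoly, hIcc, Finset.sum_insert h1notin]
    have h0 : ((‖z‖ : ℂ)) ^ (2 * (1 - 1)) = 1 := by norm_num
    rw [h0, one_mul, htsum1]
    ring
  have hG11 : G 1 1 = 2*z - 2*ζ*((starRingEnd ℂ) (b 1 1 * z)) := by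
    simp only [hG, ha11, pow_one, Nat.cast_one]
    ring
  have hG11n : 2*(‖z‖) - 2*‖b 1 1‖*(‖z‖) ≤ ‖G 1 1‖ := by
    rw [hG11]
    have h1 : ‖(2:ℂ)*z‖ = 2*‖z‖ := by
      rw [norm_mul]
      norm_num
    have h2 : ‖2*ζ*((starRingEnd ℂ) (b 1 1 * z))‖ = 2*‖b 1 1‖*‖z‖ := by
      rw [norm_mul, norm_mul,
        Complex.norm_conj, norm_mul, hζ]
      norm_num
      ring
    calc 2*(‖z‖) - 2*‖b 1 1‖*(‖z‖)
        = ‖(2:ℂ)*z‖ - ‖2*ζ*((starRingEnd ℂ) (b 1 1 * z))‖ := by rw [h1, h2]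
      _ ≤ ‖2*z - 2*ζ*((starRingEnd ℂ) (b 1 1 * z))‖ := norm_sub_norm_le _ _
  -- conclusion
  intro hcontra
  rw [hphi] at hcontra
  have heq : G 1 1 = -((∑' j : ℕ, (if j = 1 then 0 else G 1 j))
      + ∑ k ∈ Finset.Icc 2 p, ((‖z‖ : ℂ)) ^ (2 * (k - 1)) * ∑' j : ℕ, G k j) :=
    eq_neg_of_add_eq_zero_left hcontra
  have hnormeq : ‖G 1 1‖ ≤ 2*(‖z‖)^2 * (∑' j : ℕ, W 1 j)
      + (2*(‖z‖)^2 * (∑ k ∈ Finset.Icc 2 p, ∑' j : ℕ, W k j)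
        + 2*(‖z‖)^2 * ∑ k ∈ Finset.Icc 2 p, ((2 * k - 1 : ℕ) : ℝ)
          * (‖a k 1‖ + ‖b k 1‖)) := by
    rw [heq, norm_neg]
    have hstep2 : ‖∑ k ∈ Finset.Icc 2 p, ((‖z‖ : ℂ)) ^ (2 * (k - 1))
        * ∑' j : ℕ, G k j‖
        ≤ 2*(‖z‖)^2 * (∑ k ∈ Finset.Icc 2 p, ∑' j : ℕ, W k j)
          + 2*(‖z‖)^2 * ∑ k ∈ Finset.Icc 2 p, ((2 * k - 1 : ℕ) : ℝ)
            * (‖a k 1‖ + ‖b k 1‖) := by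
      calc ‖∑ k ∈ Finset.Icc 2 p, ((‖z‖ : ℂ)) ^ (2 * (k - 1)) * ∑' j : ℕ, G k j‖
          ≤ ∑ k ∈ Finset.Icc 2 p, ‖((‖z‖ : ℂ)) ^ (2 * (k - 1)) * ∑' j : ℕ, G k j‖ :=
            norm_sum_le _ _
        _ ≤ ∑ k ∈ Finset.Icc 2 p, (2*(‖z‖)^2 * (∑' j : ℕ, W k j)
            + 2*(‖z‖)^2 * (((2 * k - 1 : ℕ) : ℝ)
              * (‖a k 1‖ + ‖b k 1‖))) := Finset.sum_le_sum hk2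
        _ = 2*(‖z‖)^2 * (∑ k ∈ Finset.Icc 2 p, ∑' j : ℕ, W k j)
            + 2*(‖z‖)^2 * ∑ k ∈ Finset.Icc 2 p, ((2 * k - 1 : ℕ) : ℝ)
              * (‖a k 1‖ + ‖b k 1‖) := by
            rw [Finset.sum_add_distrib, ← Finset.mul_sum, ← Finset.mul_sum]
    calc ‖(∑' j : ℕ, (if j = 1 then 0 else G 1 j))
        + ∑ k ∈ Finset.Icc 2 p, ((‖z‖ : ℂ)) ^ (2 * (k - 1)) * ∑' j : ℕ, G k j‖
        ≤ ‖∑' j : ℕ, (if j = 1 then 0 else G 1 j)‖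
          + ‖∑ k ∈ Finset.Icc 2 p, ((‖z‖ : ℂ)) ^ (2 * (k - 1)) * ∑' j : ℕ, G k j‖ :=
          norm_add_le _ _
      _ ≤ _ := add_le_add htail hstep2
  -- convert the coefficient condition
  have hcondW : ∑ k ∈ Finset.Icc 1 p, ∑' j : ℕ, W k j
      ≤ 1 - ‖b 1 1‖ - ∑ k ∈ Finset.Icc 2 p, ((2 * k - 1 : ℕ) : ℝ)
        * (‖a k 1‖ + ‖b k 1‖) := by
    simpa only [hW] using hcond
  have hSsplit : ∑ k ∈ Finset.Icc 1 p, ∑' j : ℕ, W k j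
      = (∑' j : ℕ, W 1 j) + ∑ k ∈ Finset.Icc 2 p, ∑' j : ℕ, W k j := by
    rw [hIcc, Finset.sum_insert h1notin]
  have hr2 : (0:ℝ) ≤ 2*(‖z‖)^2 := by positivity
  have hchain : 2*(‖z‖) - 2*‖b 1 1‖*(‖z‖)
      ≤ 2*(‖z‖)^2 * (1 - ‖b 1 1‖) := by
    have h3 : (∑' j : ℕ, W 1 j) + ∑ k ∈ Finset.Icc 2 p, ∑' j : ℕ, W k j
        + ∑ k ∈ Finset.Icc 2 p, ((2 * k - 1 : ℕ) : ℝ)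
          * (‖a k 1‖ + ‖b k 1‖) ≤ 1 - ‖b 1 1‖ := by
      rw [← hSsplit]
      linarith [hcondW]
    have h4 := mul_le_mul_of_nonneg_left h3 hr2
    have h5 := le_trans hG11n hnormeq
    nlinarith [h4, h5]
  nlinarith [hchain, mul_pos (mul_pos hr0 (sub_pos.mpr hr1)) (sub_pos.mpr hb11)]
end

section
/- Let F be in HC_p and not an affine mapping. Then for every z ∈ 𝔻 \ {0} and every ζ ∈ ℂ with |ζ| = 1, the quantity Ψ(z) = (ζ+1)·L[L[F]](z) - (ζ-1)·L[F](z) is nonzero, where L = z ∂/∂z - z̄ ∂/∂z̄. -/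
open Complex Metric Finset

/-- The action of `L∘L` on the polyharmonic mapping. -/
noncomputable def polyLLF (p : ℕ) (a b : ℕ → ℕ → ℂ) (z : ℂ) : ℂ :=
  ∑ k ∈ Finset.Icc 1 p, ((‖z‖ : ℂ)) ^ (2 * (k - 1)) *
    ∑' j : ℕ, (j : ℂ) ^ 2 * (a k j * z ^ j + (starRingEnd ℂ) (b k j * z ^ j))

set_option linter.unusedVariables false
set_option linter.style.longFile 0

lemma key_ineq (ζ : ℂ) (hζ : ‖ζ‖ = 1) (s t : ℝ) (hts : |t| ≤ |s|) :
    ‖(ζ+1)*(s:ℂ) + (ζ-1)*(t:ℂ)‖ ≤ 2*|s| := by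
  have h1 : ζ.re^2 + ζ.im^2 = 1 := by
    have h := Complex.sq_norm ζ
    rw [hζ] at h
    simpa [Complex.normSq_apply, sq] using h.symm
  set w : ℂ := (ζ+1)*(s:ℂ) + (ζ-1)*(t:ℂ) with hw
  have hsq : (‖w‖)^2 = Complex.normSq w := Complex.sq_norm w
  have hns : Complex.normSq w ≤ (2*|s|)^2 := by
    have hre : w.re = (ζ.re+1)*s + (ζ.re-1)*t := by simp [hw, Complex.add_re, Complex.mul_re]
    have him : w.im = ζ.im*s + ζ.im*t := by simp [hw, Complex.add_im, Complex.mul_im]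
    rw [Complex.normSq_apply, hre, him]
    have hx1 : ζ.re ≤ 1 := by nlinarith [sq_nonneg ζ.im]
    have hx2 : -1 ≤ ζ.re := by nlinarith [sq_nonneg ζ.im]
    have hts2 : t^2 ≤ s^2 := by
      have h2 := pow_le_pow_left₀ (abs_nonneg t) hts 2
      simpa [_root_.sq_abs] using h2
    have hsabs : |s|^2 = s^2 := _root_.sq_abs s
    nlinarith [sq_nonneg (s+t), sq_nonneg (s-t)]
  have h0 : (0:ℝ) ≤ 2*|s| := by positivity
  nlinarith [norm_nonneg w]

lemma fbound (ζ : ℂ) (hζ : ‖ζ‖ = 1) (A B z : ℂ) (j : ℕ) :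
    ‖(ζ+1) * ((j:ℂ)^2 * (A * z^j + (starRingEnd ℂ) (B*z^j)))
      - (ζ-1) * ((j:ℂ) * (A*z^j - (starRingEnd ℂ) (B*z^j)))‖
    ≤ 2 * ((j:ℝ)^2 * (‖A‖ + ‖B‖) * (‖z‖)^j) := by
  have hrw : (ζ+1) * ((j:ℂ)^2 * (A * z^j + (starRingEnd ℂ) (B*z^j)))
      - (ζ-1) * ((j:ℂ) * (A*z^j - (starRingEnd ℂ) (B*z^j)))
      = (A*z^j) * ((ζ+1)*(j:ℂ)^2 + (ζ-1)*(-(j:ℂ)))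
        + ((starRingEnd ℂ) (B*z^j)) * ((ζ+1)*(j:ℂ)^2 + (ζ-1)*(j:ℂ)) := by ring
  rw [hrw]
  have hjj : |(j:ℝ)| ≤ |(j:ℝ)^2| := by
    rw [_root_.abs_of_nonneg (by positivity), _root_.abs_of_nonneg (by positivity)]
    exact_mod_cast Nat.le_self_pow two_ne_zero j
  have h1 : ‖(ζ+1)*(j:ℂ)^2 + (ζ-1)*(-(j:ℂ))‖ ≤ 2*(j:ℝ)^2 := by
    have := key_ineq ζ hζ ((j:ℝ)^2) (-(j:ℝ)) (by simpa using hjj)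
    rw [_root_.abs_of_nonneg (by positivity : (0:ℝ) ≤ (j:ℝ)^2)] at this
    convert this using 3 <;> push_cast <;> ring
  have h2 : ‖(ζ+1)*(j:ℂ)^2 + (ζ-1)*(j:ℂ)‖ ≤ 2*(j:ℝ)^2 := by
    have := key_ineq ζ hζ ((j:ℝ)^2) ((j:ℝ)) hjj
    rw [_root_.abs_of_nonneg (by positivity : (0:ℝ) ≤ (j:ℝ)^2)] at this
    convert this using 3 <;> push_cast <;> ring
  calc ‖_‖ ≤ ‖(A*z^j) * ((ζ+1)*(j:ℂ)^2 + (ζ-1)*(-(j:ℂ)))‖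
        + ‖((starRingEnd ℂ) (B*z^j)) * ((ζ+1)*(j:ℂ)^2 + (ζ-1)*(j:ℂ))‖ :=
      norm_add_le _ _
    _ ≤ ‖A‖ * (‖z‖)^j * (2*(j:ℝ)^2)
        + ‖B‖ * (‖z‖)^j * (2*(j:ℝ)^2) := by
      simp only [norm_mul, norm_pow, Complex.norm_conj]
      gcongr <;> positivity
    _ = 2 * ((j:ℝ)^2 * (‖A‖ + ‖B‖) * (‖z‖)^j) := by ring

lemma g1_bound (A B z : ℂ) (j : ℕ) :
    ‖(j:ℂ)^2 * (A * z^j + (starRingEnd ℂ) (B*z^j))‖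
    ≤ (j:ℝ)^2 * (‖A‖ + ‖B‖) * (‖z‖)^j := by
  rw [norm_mul, norm_pow]
  have h1 : ‖A * z^j + (starRingEnd ℂ) (B*z^j)‖
      ≤ (‖A‖ + ‖B‖) * (‖z‖)^j := by
    calc _ ≤ ‖A * z^j‖ + ‖(starRingEnd ℂ) (B*z^j)‖ :=
          norm_add_le _ _
      _ = ‖A‖ * (‖z‖)^j + ‖B‖ * (‖z‖)^j := by
          rw [Complex.norm_conj]; simp [norm_mul, norm_pow]
      _ = _ := by ring
  calc ‖(j:ℂ)‖^2 * ‖A * z^j + (starRingEnd ℂ) (B*z^j)‖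
      ≤ ‖(j:ℂ)‖^2 * ((‖A‖ + ‖B‖) * (‖z‖)^j) := by
        gcongr
    _ = _ := by rw [Complex.norm_natCast]; ring

lemma g2_bound (A B z : ℂ) (j : ℕ) :
    ‖(j:ℂ) * (A * z^j - (starRingEnd ℂ) (B*z^j))‖
    ≤ (j:ℝ)^2 * (‖A‖ + ‖B‖) * (‖z‖)^j := by
  rw [norm_mul]
  have h1 : ‖A * z^j - (starRingEnd ℂ) (B*z^j)‖
      ≤ (‖A‖ + ‖B‖) * (‖z‖)^j := by
    calc _ ≤ ‖A * z^j‖ + ‖(starRingEnd ℂ) (B*z^j)‖ :=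
          norm_sub_le _ _
      _ = ‖A‖ * (‖z‖)^j + ‖B‖ * (‖z‖)^j := by
          rw [Complex.norm_conj]; simp [norm_mul, norm_pow]
      _ = _ := by ring
  have hjj : ‖(j:ℂ)‖ ≤ (j:ℝ)^2 := by
    rw [Complex.norm_natCast]
    exact_mod_cast Nat.le_self_pow two_ne_zero j
  calc ‖(j:ℂ)‖ * ‖A * z^j - (starRingEnd ℂ) (B*z^j)‖
      ≤ (j:ℝ)^2 * ((‖A‖ + ‖B‖) * (‖z‖)^j) := by
        apply mul_le_mul hjj h1 (norm_nonneg _) (by positivity)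
    _ = _ := by ring

set_option maxHeartbeats 4000000 in
theorem stmt_13 (p : ℕ) (hp : 1 ≤ p) (a b : ℕ → ℕ → ℂ)
    (ha11 : a 1 1 = 1) (hb11 : ‖b 1 1‖ < 1)
    (hzero : ∀ k, a k 0 = 0 ∧ b k 0 = 0)
    (hS : ∀ k ∈ Finset.Icc 1 p, Summable (fun j : ℕ =>
      if 2 ≤ j then ((2 * (k - 1) + j ^ 2 : ℕ) : ℝ) *
        (‖a k j‖ + ‖b k j‖) else 0))
    (hcond : ∑ k ∈ Finset.Icc 1 p, ∑' j : ℕ,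
        (if 2 ≤ j then ((2 * (k - 1) + j ^ 2 : ℕ) : ℝ) *
          (‖a k j‖ + ‖b k j‖) else 0)
      ≤ 1 - ‖b 1 1‖ -
        ∑ k ∈ Finset.Icc 2 p, ((2 * k - 1 : ℕ) : ℝ) *
          (‖a k 1‖ + ‖b k 1‖))
    (hlt : ‖b 1 1‖ + ∑ k ∈ Finset.Icc 2 p, ((2 * k - 1 : ℕ) : ℝ) *
          (‖a k 1‖ + ‖b k 1‖) < 1)
    (hnaff : ¬ ∀ z : ℂ, polyF p a b z = z + (starRingEnd ℂ) (b 1 1 * z)) :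
    ∀ z ∈ ball (0:ℂ) 1, z ≠ 0 → ∀ ζ : ℂ, ‖ζ‖ = 1 →
      (ζ + 1) * polyLLF p a b z - (ζ - 1) * polyLF p a b z ≠ 0 := by
  intro z hz hz0 ζ hζ
  set r : ℝ := ‖z‖ with hr
  have hr1 : r < 1 := by
    have := mem_ball_zero_iff.mp hz
    simpa [hr] using this
  have hr0 : 0 < r := by
    simpa [hr] using (norm_pos_iff.mpr hz0)
  have hrj1 : ∀ j : ℕ, r ^ j ≤ 1 := fun j => pow_le_one₀ hr0.le hr1.le
  set β : ℝ := ‖b 1 1‖ with hβ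
  -- coefficient weight functions
  set hh : ℕ → ℕ → ℝ := fun k j => if 2 ≤ j then ((2 * (k - 1) + j ^ 2 : ℕ) : ℝ) *
        (‖a k j‖ + ‖b k j‖) else 0 with hhdef
  set S1 : ℝ := ∑ k ∈ Finset.Icc 2 p, ((2 * k - 1 : ℕ) : ℝ) *
          (‖a k 1‖ + ‖b k 1‖) with hS1def
  have hsum : ∀ k ∈ Finset.Icc 1 p, Summable (hh k) := hS
  have hcond' : ∑ k ∈ Finset.Icc 1 p, ∑' j : ℕ, hh k j ≤ 1 - β - S1 := hcond
  have hhnn : ∀ k j, 0 ≤ hh k j := by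
    intro k j
    simp only [hhdef]
    split <;> positivity
  set D : ℕ → ℕ → ℝ := fun k j => hh k j +
    (if j = 1 then ‖a k 1‖ + ‖b k 1‖ else 0) with hDdef
  set Mp : ℕ → ℕ → ℝ := fun k j =>
    (j:ℝ)^2 * (‖a k j‖ + ‖b k j‖) * r^j with hMpdef
  have hMpnn : ∀ k j, 0 ≤ Mp k j := by intro k j; simp only [hMpdef]; positivity
  have hind : ∀ c : ℝ, Summable (fun j : ℕ => if j = 1 then c else 0) := by
    intro c
    apply summable_of_ne_finset_zero (s := {1})
    intro j hj
    simp only [Finset.mem_singleton] at hj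
    simp [hj]
  have hMpD : ∀ k, ∀ j, Mp k j ≤ D k j := by
    intro k j
    match j with
    | 0 => simp [hMpdef, hDdef, hhdef]
    | 1 =>
      simp only [hMpdef, hDdef, hhdef]
      norm_num
      calc (‖a k 1‖ + ‖b k 1‖) * r
          ≤ (‖a k 1‖ + ‖b k 1‖) * 1 := by
            apply mul_le_mul_of_nonneg_left hr1.le (by positivity)
        _ = _ := by ring
    | (n+2) =>
      simp only [hMpdef, hDdef, hhdef, if_pos (by omega : 2 ≤ n+2),
        if_neg (by omega : ¬ n+2 = 1), add_zero]
      have h1 : (((n+2:ℕ)):ℝ)^2 ≤ ((2 * (k - 1) + (n+2) ^ 2 : ℕ) : ℝ) := by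
        push_cast
        nlinarith [Nat.cast_nonneg (α := ℝ) (k-1)]
      calc ((n+2:ℕ):ℝ)^2 * (‖a k (n+2)‖ + ‖b k (n+2)‖) * r^(n+2)
          ≤ ((2 * (k - 1) + (n+2) ^ 2 : ℕ) : ℝ) * (‖a k (n+2)‖ + ‖b k (n+2)‖) * 1 := by
            apply mul_le_mul (mul_le_mul_of_nonneg_right h1 (by positivity))
              (hrj1 _) (by positivity) (by positivity)
        _ = _ := by ring
  have hsumD : ∀ k ∈ Finset.Icc 1 p, Summable (D k) :=
    fun k hk => (hsum k hk).add (hind _)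
  -- the series g1, g2, f
  set g1 : ℕ → ℕ → ℂ := fun k j => (j : ℂ) ^ 2 * (a k j * z ^ j + (starRingEnd ℂ) (b k j * z ^ j)) with hg1def
  set g2 : ℕ → ℕ → ℂ := fun k j => (j : ℂ) * (a k j * z ^ j - (starRingEnd ℂ) (b k j * z ^ j)) with hg2def
  set f : ℕ → ℕ → ℂ := fun k j => (ζ+1) * g1 k j - (ζ-1) * g2 k j with hfdef
  have hg1b : ∀ k j, ‖g1 k j‖ ≤ Mp k j := fun k j => g1_bound _ _ _ _
  have hg2b : ∀ k j, ‖g2 k j‖ ≤ Mp k j := fun k j => g2_bound _ _ _ _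
  have hfb : ∀ k j, ‖f k j‖ ≤ 2 * Mp k j := fun k j => fbound ζ hζ _ _ _ _
  have hg1s : ∀ k ∈ Finset.Icc 1 p, Summable (g1 k) := by
    intro k hk
    apply Summable.of_norm_bounded (hsumD k hk)
    intro j
    exact (hg1b k j).trans (hMpD k j)
  have hg2s : ∀ k ∈ Finset.Icc 1 p, Summable (g2 k) := by
    intro k hk
    apply Summable.of_norm_bounded (hsumD k hk)
    intro j
    exact (hg2b k j).trans (hMpD k j)
  have hfs : ∀ k ∈ Finset.Icc 1 p, Summable (f k) := by
    intro k hk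
    apply Summable.of_norm_bounded ((hsumD k hk).mul_left 2)
    intro j
    exact (hfb k j).trans (by have := hMpD k j; linarith)
  have hfns : ∀ k ∈ Finset.Icc 1 p, Summable (fun j => ‖f k j‖) := by
    intro k hk
    apply Summable.of_nonneg_of_le (fun j => norm_nonneg _)
      (fun j => (hfb k j).trans (by have := hMpD k j; linarith))
      ((hsumD k hk).mul_left 2)
  -- rewrite Ψ
  have hΨ : (ζ + 1) * polyLLF p a b z - (ζ - 1) * polyLF p a b z
      = ∑ k ∈ Finset.Icc 1 p, ((r:ℂ))^(2*(k-1)) * ∑' j, f k j := by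
    unfold polyLLF polyLF
    rw [Finset.mul_sum, Finset.mul_sum, ← Finset.sum_sub_distrib]
    apply Finset.sum_congr rfl
    intro k hk
    have e1 : (ζ+1) * ((r:ℂ)^(2*(k-1)) * ∑' j, g1 k j)
        - (ζ-1) * ((r:ℂ)^(2*(k-1)) * ∑' j, g2 k j)
        = (r:ℂ)^(2*(k-1)) * ((ζ+1) * ∑' j, g1 k j - (ζ-1) * ∑' j, g2 k j) := by ring
    rw [e1]
    congr 1
    rw [← tsum_mul_left, ← tsum_mul_left,
      ← Summable.tsum_sub ((hg1s k hk).mul_left _) ((hg2s k hk).mul_left _)]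
  -- split off the (k,j) = (1,1) term
  have h1mem : (1:ℕ) ∈ Finset.Icc 1 p := by simp [hp]
  have hsplit : Finset.Icc 1 p = insert 1 (Finset.Icc 2 p) := by
    ext x
    simp only [Finset.mem_Icc, Finset.mem_insert]
    omega
  have h1ni : (1:ℕ) ∉ Finset.Icc 2 p := by simp
  have hf11 : f 1 1 = 2*z + 2*(ζ * (starRingEnd ℂ) (b 1 1 * z)) := by
    simp only [hfdef, hg1def, hg2def, ha11]
    push_cast
    ring
  set Rest : ℂ := (∑' j, if j = 1 then 0 else f 1 j)
      + ∑ k ∈ Finset.Icc 2 p, ((r:ℂ))^(2*(k-1)) * ∑' j, f k j with hRestdef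
  have hΨ2 : (ζ + 1) * polyLLF p a b z - (ζ - 1) * polyLF p a b z
      = (2*z + 2*(ζ * (starRingEnd ℂ) (b 1 1 * z))) + Rest := by
    rw [hΨ, hsplit, Finset.sum_insert h1ni]
    rw [Summable.tsum_eq_add_tsum_ite (hfs 1 h1mem) 1, hf11, hRestdef]
    norm_num
    ring
  -- head bound
  have hMp1 : ∀ j, j ≠ 1 → Mp 1 j ≤ r^2 * hh 1 j := by
    intro j hj
    match j with
    | 0 => simp [hMpdef, hhdef]
    | 1 => exact absurd rfl hj
    | (n+2) =>
      simp only [hMpdef, hhdef, if_pos (by omega : 2 ≤ n+2)]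
      have hcast : ((2 * (1 - 1) + (n+2) ^ 2 : ℕ) : ℝ) = (((n+2:ℕ)):ℝ)^2 := by push_cast; ring
      rw [hcast]
      have hpow : r^(n+2) ≤ r^2 := by
        calc r^(n+2) = r^n * r^2 := by ring
          _ ≤ 1 * r^2 := by apply mul_le_mul_of_nonneg_right (hrj1 n) (by positivity)
          _ = r^2 := one_mul _
      calc (((n+2:ℕ)):ℝ)^2 * (‖a 1 (n+2)‖ + ‖b 1 (n+2)‖) * r^(n+2)
          ≤ (((n+2:ℕ)):ℝ)^2 * (‖a 1 (n+2)‖ + ‖b 1 (n+2)‖) * r^2 := by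
            apply mul_le_mul_of_nonneg_left hpow (by positivity)
        _ = r^2 * ((((n+2:ℕ)):ℝ)^2 * (‖a 1 (n+2)‖ + ‖b 1 (n+2)‖)) := by ring
  have hhead : ‖∑' j, if j = 1 then 0 else f 1 j‖ ≤ 2*r^2 * ∑' j, hh 1 j := by
    have hsb : Summable (fun j => 2*r^2 * hh 1 j) := (hsum 1 h1mem).mul_left _
    have hper : ∀ j, ‖if j = 1 then (0:ℂ) else f 1 j‖ ≤ 2*r^2 * hh 1 j := by
      intro j
      by_cases hj : j = 1
      · rw [if_pos hj, norm_zero]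
        have h2r : (0:ℝ) ≤ 2*r^2 := by positivity
        exact mul_nonneg h2r (hhnn 1 j)
      · simp only [if_neg hj]
        calc ‖f 1 j‖ ≤ 2 * Mp 1 j := hfb 1 j
          _ ≤ 2 * (r^2 * hh 1 j) := by linarith [hMp1 j hj]
          _ = 2*r^2 * hh 1 j := by ring
    have hns : Summable (fun j => ‖if j = 1 then (0:ℂ) else f 1 j‖) :=
      Summable.of_nonneg_of_le (fun _ => norm_nonneg _) hper hsb
    calc ‖∑' j, if j = 1 then 0 else f 1 j‖
        = ‖∑' j, if j = 1 then (0:ℂ) else f 1 j‖ := rfl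
      _ ≤ ∑' j, ‖if j = 1 then (0:ℂ) else f 1 j‖ := norm_tsum_le_tsum_norm hns
      _ ≤ ∑' j, 2*r^2 * hh 1 j := Summable.tsum_le_tsum hper hns hsb
      _ = 2*r^2 * ∑' j, hh 1 j := tsum_mul_left
  -- tail bound
  have htail : ∀ k ∈ Finset.Icc 2 p, ‖((r:ℂ))^(2*(k-1)) * ∑' j, f k j‖
      ≤ 2*r^2 * (∑' j, hh k j + ((2*k-1:ℕ):ℝ)*(‖a k 1‖+‖b k 1‖)) := by
    intro k hk
    have hk2 : 2 ≤ k := (Finset.mem_Icc.mp hk).1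
    have hkmem : k ∈ Finset.Icc 1 p := Finset.mem_Icc.mpr ⟨by omega, (Finset.mem_Icc.mp hk).2⟩
    set w : ℝ := ((2*k-1:ℕ):ℝ)*(‖a k 1‖+‖b k 1‖) with hwdef
    have hwnn : 0 ≤ w := by simp only [hwdef]; positivity
    have hper : ∀ j, r^(2*(k-1)) * ‖f k j‖
        ≤ 2*r^2 * (hh k j + (if j = 1 then w else 0)) := by
      intro j
      match j with
      | 0 =>
        have h0 : ‖f k 0‖ ≤ 0 := by
          have := hfb k 0
          simpa [hMpdef] using this
        have h0' : ‖f k 0‖ = 0 := le_antisymm h0 (norm_nonneg _)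
        rw [h0', mul_zero]
        have h1 := hhnn k 0
        have h2 : (0:ℝ) ≤ if (0:ℕ) = 1 then w else 0 := by
          split
          · exact hwnn
          · exact le_refl 0
        nlinarith [sq_nonneg r]
      | 1 =>
        simp only [if_pos rfl]
        have hhh1 : hh k 1 = 0 := by simp [hhdef]
        rw [hhh1, zero_add]
        have hMp1' : Mp k 1 = (‖a k 1‖+‖b k 1‖) * r := by
          simp [hMpdef]
        have hone : (1:ℝ) ≤ ((2*k-1:ℕ):ℝ) := by
          have : (1:ℕ) ≤ 2*k-1 := by omega
          exact_mod_cast this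
        have hpow : r^(2*(k-1)) * r ≤ r^2 := by
          calc r^(2*(k-1)) * r = r^(2*(k-1)+1) := by ring
            _ ≤ r^2 := pow_le_pow_of_le_one hr0.le hr1.le (by omega)
        calc r^(2*(k-1)) * ‖f k 1‖
            ≤ r^(2*(k-1)) * (2 * Mp k 1) := by
              apply mul_le_mul_of_nonneg_left (hfb k 1) (by positivity)
          _ = 2 * (‖a k 1‖+‖b k 1‖) * (r^(2*(k-1)) * r) := by
              rw [hMp1']; ring
          _ ≤ 2 * (‖a k 1‖+‖b k 1‖) * r^2 := by
              apply mul_le_mul_of_nonneg_left hpow (by positivity)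
          _ ≤ 2*r^2 * w := by
              rw [hwdef]
              nlinarith [mul_nonneg (by positivity : (0:ℝ) ≤ 2*r^2)
                (mul_nonneg (by positivity : (0:ℝ) ≤ ‖a k 1‖+‖b k 1‖)
                  (sub_nonneg.mpr hone))]
      | (n+2) =>
        simp only [if_neg (by omega : ¬ n+2 = 1), add_zero]
        have hhh : hh k (n+2) = ((2 * (k - 1) + (n+2) ^ 2 : ℕ) : ℝ) *
            (‖a k (n+2)‖ + ‖b k (n+2)‖) := by
          simp [hhdef]
        have hj2 : (((n+2:ℕ)):ℝ)^2 ≤ ((2 * (k - 1) + (n+2) ^ 2 : ℕ) : ℝ) := by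
          push_cast
          nlinarith [Nat.cast_nonneg (α := ℝ) (k-1)]
        have hpow : r^(2*(k-1)) * r^(n+2) ≤ r^2 := by
          calc r^(2*(k-1)) * r^(n+2) = (r^(2*(k-1)) * r^n) * r^2 := by ring
            _ ≤ 1 * r^2 := by
                apply mul_le_mul_of_nonneg_right _ (by positivity)
                calc r^(2*(k-1)) * r^n = r^(2*(k-1)+n) := by rw [pow_add]
                  _ ≤ 1 := hrj1 _
            _ = r^2 := one_mul _
        calc r^(2*(k-1)) * ‖f k (n+2)‖
            ≤ r^(2*(k-1)) * (2 * Mp k (n+2)) := by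
              apply mul_le_mul_of_nonneg_left (hfb k (n+2)) (by positivity)
          _ = 2 * ((((n+2:ℕ)):ℝ)^2 * (‖a k (n+2)‖ + ‖b k (n+2)‖))
              * (r^(2*(k-1)) * r^(n+2)) := by
              simp only [hMpdef]; ring
          _ ≤ 2 * (((2 * (k - 1) + (n+2) ^ 2 : ℕ) : ℝ) *
              (‖a k (n+2)‖ + ‖b k (n+2)‖)) * r^2 := by
              apply mul_le_mul _ hpow (by positivity) (by positivity)
              have : (0:ℝ) ≤ ‖a k (n+2)‖ + ‖b k (n+2)‖ := by positivity
              nlinarith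
          _ = 2*r^2 * hh k (n+2) := by rw [hhh]; ring
    have hsl : Summable (fun j => r^(2*(k-1)) * ‖f k j‖) :=
      (hfns k hkmem).mul_left _
    have hsr : Summable (fun j => 2*r^2 * (hh k j + (if j = 1 then w else 0))) :=
      ((hsum k hkmem).add (hind w)).mul_left _
    have habsc : ‖((r:ℂ))^(2*(k-1))‖ = r^(2*(k-1)) := by
      rw [norm_pow, Complex.norm_real, Real.norm_eq_abs, _root_.abs_of_nonneg hr0.le]
    calc ‖((r:ℂ))^(2*(k-1)) * ∑' j, f k j‖
        = r^(2*(k-1)) * ‖∑' j, f k j‖ := by rw [norm_mul, habsc]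
      _ ≤ r^(2*(k-1)) * ∑' j, ‖f k j‖ := by
          apply mul_le_mul_of_nonneg_left _ (by positivity)
          exact norm_tsum_le_tsum_norm (f := f k) (hfns k hkmem)
      _ = ∑' j, r^(2*(k-1)) * ‖f k j‖ := tsum_mul_left.symm
      _ ≤ ∑' j, 2*r^2 * (hh k j + (if j = 1 then w else 0)) := Summable.tsum_le_tsum hper hsl hsr
      _ = 2*r^2 * ∑' j, (hh k j + (if j = 1 then w else 0)) := tsum_mul_left
      _ = 2*r^2 * (∑' j, hh k j + w) := by
          rw [Summable.tsum_add (hsum k hkmem) (hind w), tsum_ite_eq]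
  -- total bound on Rest
  have hRestb : ‖Rest‖ ≤ 2*r^2*(1-β) := by
    have hsum_tail : ∑ k ∈ Finset.Icc 2 p,
        (2*r^2 * (∑' j, hh k j + ((2*k-1:ℕ):ℝ)*(‖a k 1‖+‖b k 1‖)))
        = 2*r^2 * ((∑ k ∈ Finset.Icc 2 p, ∑' j, hh k j) + S1) := by
      simp only [mul_add]
      rw [Finset.sum_add_distrib]
      congr 1
      · rw [Finset.mul_sum]
      · rw [hS1def, Finset.mul_sum]
        exact Finset.sum_congr rfl fun x _ => by ring
    calc ‖Rest‖
        ≤ ‖∑' j, if j = 1 then 0 else f 1 j‖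
          + ‖∑ k ∈ Finset.Icc 2 p, ((r:ℂ))^(2*(k-1)) * ∑' j, f k j‖ :=
          norm_add_le _ _
      _ ≤ 2*r^2 * ∑' j, hh 1 j
          + ∑ k ∈ Finset.Icc 2 p, ‖((r:ℂ))^(2*(k-1)) * ∑' j, f k j‖ :=
          add_le_add hhead (norm_sum_le _ _)
      _ ≤ 2*r^2 * ∑' j, hh 1 j + ∑ k ∈ Finset.Icc 2 p,
          2*r^2 * (∑' j, hh k j + ((2*k-1:ℕ):ℝ)*(‖a k 1‖+‖b k 1‖)) :=
          add_le_add_right (Finset.sum_le_sum htail) _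
      _ = 2*r^2 * (∑ k ∈ Finset.Icc 1 p, ∑' j, hh k j + S1) := by
          rw [hsum_tail, hsplit, Finset.sum_insert h1ni]
          ring
      _ ≤ 2*r^2*(1-β) := by
          have h2r : (0:ℝ) ≤ 2*r^2 := by positivity
          apply mul_le_mul_of_nonneg_left _ h2r
          linarith [hcond']
  -- lower bound on the main term and conclusion
  have hconjabs : ‖(starRingEnd ℂ) (b 1 1 * z)‖ = β * r := by
    rw [Complex.norm_conj, norm_mul]
  have e2 : ‖2*z‖ = 2*r := by
    rw [norm_mul, Complex.norm_two]
  have e1 : ‖2*(ζ * (starRingEnd ℂ) (b 1 1 * z))‖ = 2*(β*r) := by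
    rw [norm_mul, norm_mul, hζ, hconjabs, Complex.norm_two]
    ring
  intro hzeq
  rw [hΨ2] at hzeq
  have hM : (2*z + 2*(ζ * (starRingEnd ℂ) (b 1 1 * z))) = -Rest := by
    linear_combination hzeq
  have habs : ‖2*z + 2*(ζ * (starRingEnd ℂ) (b 1 1 * z))‖ = ‖Rest‖ := by
    rw [hM, norm_neg]
  have e3 : 2*r - 2*(β*r) ≤ ‖2*z + 2*(ζ * (starRingEnd ℂ) (b 1 1 * z))‖ := by
    have h4 : (2*z : ℂ) = (2*z + 2*(ζ * (starRingEnd ℂ) (b 1 1 * z)))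
        + (-(2*(ζ * (starRingEnd ℂ) (b 1 1 * z)))) := by ring
    have h5 := norm_add_le (2*z + 2*(ζ * (starRingEnd ℂ) (b 1 1 * z)))
        (-(2*(ζ * (starRingEnd ℂ) (b 1 1 * z))))
    rw [← h4, e2, norm_neg, e1] at h5
    linarith
  have hfinal : 2*r - 2*(β*r) ≤ 2*r^2*(1-β) := by
    calc 2*r - 2*(β*r) ≤ _ := e3
      _ = ‖Rest‖ := habs
      _ ≤ _ := hRestb
  nlinarith [mul_pos (mul_pos hr0 (sub_pos.mpr hb11)) (sub_pos.mpr hr1)]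
end

section
/- If F ∈ HC_p with a_{k,1} = 0 for all k ∈ {2,...,p}, and for 0 < r < 1 we set F_r(z) = Σ_{k=1}^p r^{2(k-1)}(h_k(z) + conj(g_k(z))), then the coefficients A_j = Σ_{k=1}^p a_{k,j} r^{2(k-1)} and B_j = Σ_{k=1}^p b_{k,j} r^{2(k-1)} of F_r satisfy Σ_{j≥2} j²(|A_j| + |B_j|) ≤ 1 - |B_1|, i.e., F_r belongs to the harmonic class HC. -/
open Complex Metric Finset

theorem stmt_15 (p : ℕ) (hp : 1 ≤ p) (a b : ℕ → ℕ → ℂ) (r : ℝ)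
    (hr0 : 0 < r) (hr1 : r < 1)
    (ha11 : a 1 1 = 1) (hak1 : ∀ k ∈ Finset.Icc 2 p, a k 1 = 0)
    (hS : ∀ k ∈ Finset.Icc 1 p, Summable (fun j : ℕ =>
      if 2 ≤ j then ((2 * (k - 1) + j ^ 2 : ℕ) : ℝ) *
        (‖a k j‖ + ‖b k j‖) else 0))
    (hcond : ∑ k ∈ Finset.Icc 1 p, ∑' j : ℕ,
        (if 2 ≤ j then ((2 * (k - 1) + j ^ 2 : ℕ) : ℝ) *
          (‖a k j‖ + ‖b k j‖) else 0)
      ≤ 1 - ‖b 1 1‖ -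
        ∑ k ∈ Finset.Icc 2 p, ((2 * k - 1 : ℕ) : ℝ) *
          (‖a k 1‖ + ‖b k 1‖))
    (hlt : ‖b 1 1‖ + ∑ k ∈ Finset.Icc 2 p, ((2 * k - 1 : ℕ) : ℝ) *
          (‖a k 1‖ + ‖b k 1‖) < 1)
    (A B : ℕ → ℂ)
    (hA : ∀ j, A j = ∑ k ∈ Finset.Icc 1 p, a k j * (r : ℂ) ^ (2 * (k - 1)))
    (hB : ∀ j, B j = ∑ k ∈ Finset.Icc 1 p, b k j * (r : ℂ) ^ (2 * (k - 1))) :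
    ∑' j : ℕ, (if 2 ≤ j then ((j : ℝ)) ^ 2 * (‖A j‖ + ‖B j‖) else 0)
      ≤ 1 - ‖B 1‖ := by
  set S : ℝ := ∑ k ∈ Finset.Icc 2 p, ((2 * k - 1 : ℕ) : ℝ) *
          (‖a k 1‖ + ‖b k 1‖) with hSdef
  have hrpow : ∀ n : ℕ, ‖(r : ℂ) ^ n‖ ≤ 1 := by
    intro n
    rw [norm_pow, Complex.norm_real, Real.norm_eq_abs, _root_.abs_of_pos hr0]
    exact pow_le_one₀ hr0.le hr1.le
  have habs : ∀ (c : ℕ → ℕ → ℂ) (j : ℕ),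
      ‖∑ k ∈ Finset.Icc 1 p, c k j * (r : ℂ) ^ (2 * (k - 1))‖
        ≤ ∑ k ∈ Finset.Icc 1 p, ‖c k j‖ := by
    intro c j
    refine (norm_sum_le _ _).trans ?_
    refine Finset.sum_le_sum fun k _ => ?_
    rw [norm_mul]
    calc ‖c k j‖ * ‖(r:ℂ) ^ (2*(k-1))‖
        ≤ ‖c k j‖ * 1 := by
          gcongr; exact hrpow _
      _ = ‖c k j‖ := mul_one _
  set f : ℕ → ℝ := fun j => if 2 ≤ j then ((j : ℝ)) ^ 2 * (‖A j‖ + ‖B j‖) else 0 with hf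
  set g : ℕ → ℝ := fun j => ∑ k ∈ Finset.Icc 1 p,
      (if 2 ≤ j then ((2 * (k - 1) + j ^ 2 : ℕ) : ℝ) *
        (‖a k j‖ + ‖b k j‖) else 0) with hg
  have hfg : ∀ j, f j ≤ g j := by
    intro j
    by_cases hj : 2 ≤ j
    · simp only [hf, hg, if_pos hj]
      have hAj : ‖A j‖ ≤ ∑ k ∈ Finset.Icc 1 p, ‖a k j‖ := by
        rw [hA j]; exact habs a j
      have hBj : ‖B j‖ ≤ ∑ k ∈ Finset.Icc 1 p, ‖b k j‖ := by
        rw [hB j]; exact habs b j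
      calc (j:ℝ)^2 * (‖A j‖ + ‖B j‖)
          ≤ (j:ℝ)^2 * (∑ k ∈ Finset.Icc 1 p, ‖a k j‖
              + ∑ k ∈ Finset.Icc 1 p, ‖b k j‖) := by
            refine mul_le_mul_of_nonneg_left (add_le_add hAj hBj) (by positivity)
        _ = ∑ k ∈ Finset.Icc 1 p, (j:ℝ)^2 * (‖a k j‖ + ‖b k j‖) := by
            rw [← Finset.sum_add_distrib, Finset.mul_sum]
        _ ≤ ∑ k ∈ Finset.Icc 1 p, ((2 * (k - 1) + j ^ 2 : ℕ) : ℝ) *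
              (‖a k j‖ + ‖b k j‖) := by
            refine Finset.sum_le_sum fun k _ => ?_
            refine mul_le_mul_of_nonneg_right ?_ (by positivity)
            have hjc : ((j:ℝ))^2 = ((j^2 : ℕ) : ℝ) := by push_cast; ring
            rw [hjc]
            exact_mod_cast Nat.le_add_left _ _
    · simp [hf, hg, if_neg hj]
  have hfnn : ∀ j, 0 ≤ f j := by
    intro j
    simp only [hf]
    split
    · positivity
    · exact le_rfl
  have hgsum : Summable g := summable_sum fun k hk => hS k hk
  have hfsum : Summable f := hgsum.of_nonneg_of_le hfnn hfg
  have h1 : ∑' j, f j ≤ ∑' j, g j := Summable.tsum_le_tsum hfg hfsum hgsum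
  have h2 : ∑' j, g j = ∑ k ∈ Finset.Icc 1 p, ∑' j : ℕ,
      (if 2 ≤ j then ((2 * (k - 1) + j ^ 2 : ℕ) : ℝ) *
        (‖a k j‖ + ‖b k j‖) else 0) :=
    Summable.tsum_finsetSum fun k hk => hS k hk
  have hB1 : ‖B 1‖ ≤ ‖b 1 1‖ + S := by
    rw [hB]
    have hins : Finset.Icc 1 p = insert 1 (Finset.Icc 2 p) := by
      ext x; simp [Finset.mem_Icc, Finset.mem_insert]; omega
    rw [hins, Finset.sum_insert (by simp)]
    refine (norm_add_le _ _).trans ?_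
    gcongr
    · simp
    · refine (norm_sum_le _ _).trans ?_
      refine Finset.sum_le_sum fun k hk => ?_
      rw [norm_mul]
      have h1k : (1:ℝ) ≤ ((2*k-1 : ℕ):ℝ) := by
        have hk2 : 2 ≤ k := (Finset.mem_Icc.mp hk).1
        have h3 : (1:ℕ) ≤ 2*k-1 := by omega
        exact_mod_cast h3
      calc ‖b k 1‖ * ‖(r:ℂ)^(2*(k-1))‖
          ≤ ‖b k 1‖ * 1 := by gcongr; exact hrpow _
        _ ≤ ((2*k-1 : ℕ):ℝ) * (‖a k 1‖ + ‖b k 1‖) := by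
            rw [mul_one]
            nlinarith [norm_nonneg (a k 1),
              norm_nonneg (b k 1)]
  calc ∑' j, f j ≤ ∑' j, g j := h1
    _ = _ := h2
    _ ≤ 1 - ‖b 1 1‖ - S := hcond
    _ ≤ 1 - ‖B 1‖ := by linarith
end
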